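/- Trapped-set localization for the lifted linear IFS (part of Lemma A.3): Let 0 < J_1 ≤ J_2, set τ_1 := 0, τ_2 := 1 and R := 1/(e^{J_2} − 1). Suppose (j_k)_{k∈ℤ} ∈ {1,2}^{ℤ} and (ξ_k)_{k∈ℤ} ⊂ ℝ satisfy ξ_{k+1} = e^{J_{j_k}} ξ_k + τ_{j_k} for all k ∈ ℤ, and sup_{k∈ℤ} |ξ_k| < ∞. Then ξ_k ∈ [−R, 0] for all k ∈ ℤ. -/

import Mathlib

/-- **Trapped-set localization for the lifted linear IFS** (part of Lemma A.3).
Let `0 < J₁ ≤ J₂`, `τ₁ := 0`, `τ₂ := 1`, `R := 1/(e^{J₂} − 1)`. If a bi-infinite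
sequence `(ξ_k)` evolves by `ξ_{k+1} = e^{J_{j_k}} ξ_k + τ_{j_k}` along branches
`j_k ∈ {1,2}` and is bounded, then `ξ_k ∈ [−R, 0]` for all `k ∈ ℤ`. -/
theorem linear_IFS_trapped_set_localization (J₁ J₂ : ℝ) (hJ₁ : 0 < J₁) (hJ₁₂ : J₁ ≤ J₂)
    (j : ℤ → Fin 2) (ξ : ℤ → ℝ)
    (hrec : ∀ k : ℤ, ξ (k + 1) = Real.exp ((![J₁, J₂]) (j k)) * ξ k + (![(0 : ℝ), 1]) (j k))
    (hbd : ∃ M : ℝ, ∀ k : ℤ, |ξ k| ≤ M) :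
    ∀ k : ℤ, ξ k ∈ Set.Icc (-(1 / (Real.exp J₂ - 1))) (0 : ℝ) := by
  obtain ⟨M, hM⟩ := hbd
  set R : ℝ := 1 / (Real.exp J₂ - 1) with hR
  have hJ₂ : 0 < J₂ := lt_of_lt_of_le hJ₁ hJ₁₂
  have hE1 : 1 < Real.exp J₁ := Real.one_lt_exp_iff.mpr hJ₁
  have hE2 : 1 < Real.exp J₂ := Real.one_lt_exp_iff.mpr hJ₂
  have hE12 : Real.exp J₁ ≤ Real.exp J₂ := Real.exp_le_exp.mpr hJ₁₂
  have hRpos : 0 < R := by rw [hR]; exact div_pos one_pos (by linarith)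
  have hRE : Real.exp J₂ * R = R + 1 := by
    have hne : Real.exp J₂ - 1 ≠ 0 := by linarith
    rw [hR]; field_simp; ring
  -- branch-wise recursion estimates
  have hcase : ∀ m : ℤ, j m = 0 ∨ j m = 1 := by
    intro m; omega
  have step_up : ∀ m : ℤ, 0 < ξ m → Real.exp J₁ * ξ m ≤ ξ (m + 1) := by
    intro m hm
    rcases hcase m with h | h <;> rw [hrec m, h] <;> simp <;> nlinarith [Real.exp_pos J₁]
  have step_down : ∀ m : ℤ, ξ m + R < 0 → ξ (m + 1) + R ≤ Real.exp J₁ * (ξ m + R) := by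
    intro m hm
    rcases hcase m with h | h <;> rw [hrec m, h] <;> simp <;> nlinarith [Real.exp_pos J₁]
  intro k
  constructor
  · -- lower bound: suppose ξ k < -R
    by_contra hlt
    push_neg at hlt
    have hneg : ξ k + R < 0 := by linarith
    have key : ∀ n : ℕ, ξ (k + n) + R ≤ Real.exp J₁ ^ n * (ξ k + R) := by
      intro n
      induction n with
      | zero => simp
      | succ n ih =>
        have hn : ξ (k + n) + R < 0 := lt_of_le_of_lt ih (by
          have : 0 < Real.exp J₁ ^ n := by positivity
          nlinarith)
        have := step_down (k + n) hn
        have heq : (k : ℤ) + (n + 1 : ℕ) = (k + n) + 1 := by push_cast; ring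
        rw [heq]
        calc ξ ((k + n) + 1) + R ≤ Real.exp J₁ * (ξ (k + n) + R) := this
          _ ≤ Real.exp J₁ * (Real.exp J₁ ^ n * (ξ k + R)) := by
              nlinarith [Real.exp_pos J₁]
          _ = Real.exp J₁ ^ (n + 1) * (ξ k + R) := by ring
    set c : ℝ := -(ξ k + R) with hc
    have hcpos : 0 < c := by linarith
    obtain ⟨n, hn⟩ := pow_unbounded_of_one_lt (M / c) hE1
    have h1 : ξ (k + n) ≤ Real.exp J₁ ^ n * (ξ k + R) - R := by
      have := key n; linarith
    have h2 : M < Real.exp J₁ ^ n * c := (div_lt_iff₀ hcpos).mp hn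
    have h3 : ξ (k + n) < -M := by
      have : Real.exp J₁ ^ n * (ξ k + R) = -(Real.exp J₁ ^ n * c) := by rw [hc]; ring
      nlinarith
    have := hM (k + n)
    rw [abs_le] at this
    linarith [this.1]
  · -- upper bound: suppose ξ k > 0
    by_contra hlt
    push_neg at hlt
    have key : ∀ n : ℕ, Real.exp J₁ ^ n * ξ k ≤ ξ (k + n) := by
      intro n
      induction n with
      | zero => simp
      | succ n ih =>
        have hn : 0 < ξ (k + n) := lt_of_lt_of_le (by positivity) ih
        have := step_up (k + n) hn
        have heq : (k : ℤ) + (n + 1 : ℕ) = (k + n) + 1 := by push_cast; ring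
        rw [heq]
        calc Real.exp J₁ ^ (n + 1) * ξ k = Real.exp J₁ * (Real.exp J₁ ^ n * ξ k) := by ring
          _ ≤ Real.exp J₁ * ξ (k + n) := by nlinarith [Real.exp_pos J₁]
          _ ≤ ξ ((k + n) + 1) := this
    obtain ⟨n, hn⟩ := pow_unbounded_of_one_lt (M / ξ k) hE1
    have h2 : M < Real.exp J₁ ^ n * ξ k := (div_lt_iff₀ hlt).mp hn
    have := hM (k + n)
    rw [abs_le] at this
    linarith [key n, this.2]
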